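/- For any sequence x in D, the tail values of 𝔉 converge to 1: lim_{n→∞} 𝔉({x_k}_{k=n}^{∞}) = 1. Moreover the truncations converge: lim_{n→∞} 𝔉(x_1, …, x_n) = 𝔉(x). -/

import Mathlib

open Classical

noncomputable def Fterm (x : ℕ → ℂ) (m : ℕ) (k : Fin m → ℕ) : ℂ :=
  if ∀ i : Fin m, ∀ h : (i : ℕ) + 1 < m, k i + 2 ≤ k ⟨(i : ℕ) + 1, h⟩ then
    ∏ i : Fin m, x (k i) * x (k i + 1)
  else 0

/-- The function 𝔉 applied to the sequence (x 0, x 1, x 2, …), i.e. x is 0-based: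
`x k` represents `x_{k+1}` of the paper. -/
noncomputable def FF (x : ℕ → ℂ) : ℂ :=
  1 + ∑' m : ℕ, (-1 : ℂ) ^ (m + 1) * (∑' k : Fin (m + 1) → ℕ, Fterm x (m + 1) k)

/-- 𝔉 of the finite tuple (x 0, …, x (n-1)), by extending with zeros. -/
noncomputable def FFfin (n : ℕ) (x : ℕ → ℂ) : ℂ :=
  FF fun k => if k < n then x k else 0
namespace FFaux

def Inc (n : ℕ) (k : Fin n → ℕ) : Prop :=
  ∀ i : Fin n, ∀ h : (i : ℕ) + 1 < n, k i + 2 ≤ k ⟨(i : ℕ) + 1, h⟩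

lemma Inc.strictMono {n : ℕ} {k : Fin n → ℕ} (hk : Inc n k) : StrictMono k := by
  cases n with
  | zero => exact fun a => a.elim0
  | succ n =>
    rw [Fin.strictMono_iff_lt_succ]
    intro i
    have h : (i : ℕ) + 1 < n + 1 := by omega
    have := hk i.castSucc (by simp [h])
    have h2 : (⟨(i.castSucc : ℕ) + 1, by simp [h]⟩ : Fin (n+1)) = i.succ := by
      ext; simp
    rw [h2] at this
    omega

lemma tsum_pi_prod (A : ℕ → ENNReal) (n : ℕ) :
    ∑' k : Fin n → ℕ, ∏ i, A (k i) = (∑' j, A j) ^ n := by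
  induction n with
  | zero =>
    have : (∑' _ : Fin 0 → ℕ, (1:ENNReal)) = 1 := tsum_eq_single (fun i => i.elim0)
      (fun b hb => absurd (funext fun i => i.elim0) hb)
    simpa using this
  | succ n ih =>
    rw [← (Fin.consEquiv fun _ : Fin (n+1) => ℕ).tsum_eq (fun k => ∏ i, A (k i))]
    have : ∀ p : ℕ × (Fin n → ℕ),
        (∏ i, A (((Fin.consEquiv fun _ : Fin (n+1) => ℕ) p) i)) = A p.1 * ∏ i, A (p.2 i) := by
      intro p
      rw [Fin.prod_univ_succ]
      simp [Fin.consEquiv]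
    calc ∑' p : ℕ × (Fin n → ℕ), (∏ i, A (((Fin.consEquiv fun _ : Fin (n+1) => ℕ) p) i))
        = ∑' p : ℕ × (Fin n → ℕ), A p.1 * ∏ i, A (p.2 i) := by
          exact tsum_congr this
      _ = ∑' (a : ℕ) (t : Fin n → ℕ), A a * ∏ i, A (t i) := ENNReal.tsum_prod (f := fun (a : ℕ) (t : Fin n → ℕ) => A a * ∏ i, A (t i))
      _ = (∑' j, A j) ^ n.succ := by
          simp_rw [ENNReal.tsum_mul_left, ih, ENNReal.tsum_mul_right]
          rw [pow_succ]; ring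


lemma perm_strictMono_eq_id {n : ℕ} {f : Fin n → Fin n} (hf : StrictMono f)
    (hb : Function.Bijective f) : ∀ i, f i = i := by
  obtain ⟨g, hg1, hg2⟩ := Function.bijective_iff_has_inverse.mp hb
  have hgm : StrictMono g := by
    intro a b hab
    rcases lt_trichotomy (g a) (g b) with h | h | h
    · exact h
    · exact absurd (by rw [← hg2 a, ← hg2 b, h]) hab.ne
    · exact absurd (by calc b = f (g b) := (hg2 b).symm
                      _ < f (g a) := hf h
                      _ = a := hg2 a) (not_lt.mpr hab.le)
  haveI : WellFoundedLT (Fin n) := inferInstance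
  intro i
  have h1 : i ≤ f i := hf.le_apply
  have h2 : i ≤ g i := hgm.le_apply
  have := hf.monotone h2
  rw [hg2] at this
  exact le_antisymm this h1

lemma phi_injective (n : ℕ) :
    Function.Injective (fun p : Equiv.Perm (Fin n) × {k : Fin n → ℕ // Inc n k} =>
      (p.2.1 ∘ p.1 : Fin n → ℕ)) := by
  rintro ⟨σ, k, hk⟩ ⟨σ', k', hk'⟩ h
  simp only at h
  -- k ∘ σ = k' ∘ σ'
  have hmono : StrictMono (k : Fin n → ℕ) := Inc.strictMono hk
  have hmono' : StrictMono (k' : Fin n → ℕ) := Inc.strictMono hk'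
  set f : Fin n → Fin n := σ ∘ σ'.symm with hf
  have hkk' : ∀ i, k' i = k (f i) := by
    intro i
    have := congrFun h (σ'.symm i)
    simpa [hf] using this.symm
  have hfm : StrictMono f := by
    intro a b hab
    have : k (f a) < k (f b) := by rw [← hkk', ← hkk']; exact hmono' hab
    exact hmono.lt_iff_lt.mp this
  have hfb : Function.Bijective f := (σ'.symm.trans σ).bijective
  have hfid := perm_strictMono_eq_id hfm hfb
  have hσ : σ = σ' := by
    ext i
    have := hfid (σ' i)
    -- this : f (σ' i) = σ' i
    exact congrArg Fin.val (by simpa [hf] using this)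
  have hk2 : k = k' := by
    funext i
    rw [hkk' i, hfid i]
  subst hσ
  simp [Prod.ext_iff, Subtype.ext_iff, hk2]

lemma factorial_mul_incsum_le (A : ℕ → ENNReal) (n : ℕ) :
    (n.factorial : ENNReal) * (∑' k : Fin n → ℕ, if Inc n k then ∏ i, A (k i) else 0)
      ≤ (∑' k : Fin n → ℕ, ∏ i, A (k i)) := by
  have step1 : (∑' k : Fin n → ℕ, if Inc n k then ∏ i, A (k i) else 0)
      = ∑' k : {k : Fin n → ℕ // Inc n k}, ∏ i, A (k.1 i) := by
    have h1 := tsum_subtype {k : Fin n → ℕ | Inc n k} (fun k => ∏ i, A (k i))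
    refine Eq.trans (tsum_congr fun k => ?_) h1.symm
    by_cases h : Inc n k <;> simp [Set.indicator_apply, Set.mem_setOf_eq, h]
  set X := ∑' k : {k : Fin n → ℕ // Inc n k}, ∏ i, A (k.1 i) with hX
  have step2 : (n.factorial : ENNReal) * X
      = ∑' p : Equiv.Perm (Fin n) × {k : Fin n → ℕ // Inc n k}, ∏ i, A (p.2.1 (p.1 i)) := by
    calc (n.factorial : ENNReal) * X
        = ∑' _ : Equiv.Perm (Fin n), X := by
          rw [tsum_fintype (fun _ : Equiv.Perm (Fin n) => X), Finset.sum_const,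
            Finset.card_univ, Fintype.card_perm, Fintype.card_fin, nsmul_eq_mul]
      _ = ∑' (σ : Equiv.Perm (Fin n)), ∑' k : {k : Fin n → ℕ // Inc n k},
            ∏ i, A (k.1 (σ i)) := by
          refine tsum_congr fun σ => ?_
          rw [hX]
          exact (tsum_congr fun (k : {k : Fin n → ℕ // Inc n k}) => Equiv.prod_comp σ fun i => A (k.1 i)).symm
      _ = ∑' p : Equiv.Perm (Fin n) × {k : Fin n → ℕ // Inc n k}, ∏ i, A (p.2.1 (p.1 i)) :=
          (ENNReal.tsum_prod (f := fun (σ : Equiv.Perm (Fin n))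
            (k : {k : Fin n → ℕ // Inc n k}) => ∏ i, A (k.1 (σ i)))).symm
  rw [step1, step2]
  have := ENNReal.tsum_comp_le_tsum_of_injective (phi_injective n)
    (fun t : Fin n → ℕ => ∏ i, A (t i))
  simpa using this

end FFaux

namespace FFaux2
open FFaux

lemma incsum_le (A : ℕ → ENNReal) (n : ℕ) :
    (∑' k : Fin n → ℕ, if Inc n k then ∏ i, A (k i) else 0)
      ≤ (∑' j, A j) ^ n / n.factorial := by
  rw [ENNReal.le_div_iff_mul_le (Or.inl (by exact_mod_cast Nat.factorial_ne_zero n))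
    (Or.inl (by simp))]
  rw [mul_comm]
  exact (factorial_mul_incsum_le A n).trans (le_of_eq (tsum_pi_prod A n))

lemma incsum_last_le (A : ℕ → ENNReal) (n N : ℕ) :
    (∑' k : Fin (n+1) → ℕ,
        if Inc (n+1) k ∧ N ≤ k (Fin.last n) then ∏ i, A (k i) else 0)
      ≤ ((∑' j, A j) ^ n / n.factorial) * ∑' j, (if N ≤ j then A j else 0) := by
  set H : (Fin n → ℕ) × ℕ → ENNReal := fun p =>
    (if Inc n p.1 then ∏ i, A (p.1 i) else 0) * (if N ≤ p.2 then A p.2 else 0) with hH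
  set Ψ : (Fin (n+1) → ℕ) → (Fin n → ℕ) × ℕ :=
    fun k => (k ∘ Fin.castSucc, k (Fin.last n)) with hΨ
  have hΨinj : Function.Injective Ψ := by
    intro k k' h
    rw [Prod.ext_iff] at h
    funext i
    refine Fin.lastCases ?_ ?_ i
    · exact h.2
    · intro j; exact congrFun h.1 j
  have hpoint : ∀ k : Fin (n+1) → ℕ,
      (if Inc (n+1) k ∧ N ≤ k (Fin.last n) then ∏ i, A (k i) else 0) ≤ H (Ψ k) := by
    intro k
    by_cases hc : Inc (n+1) k ∧ N ≤ k (Fin.last n)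
    · rw [if_pos hc, hH, hΨ]
      have hinc : Inc n (k ∘ Fin.castSucc) := by
        intro i h
        have h1 : ((i.castSucc : Fin (n+1)) : ℕ) + 1 < n + 1 := by simp only [Fin.coe_castSucc]; omega
        have := hc.1 i.castSucc h1
        have h2 : (⟨((i.castSucc : Fin (n+1)) : ℕ) + 1, h1⟩ : Fin (n+1))
            = Fin.castSucc ⟨(i : ℕ) + 1, h⟩ := by ext; simp
        rw [h2] at this
        simpa using this
      simp only [hinc, if_pos, hc.2]
      rw [Fin.prod_univ_castSucc (f := fun i => A (k i))]
      exact le_of_eq rfl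
    · rw [if_neg hc]; exact zero_le
  calc (∑' k : Fin (n+1) → ℕ,
        if Inc (n+1) k ∧ N ≤ k (Fin.last n) then ∏ i, A (k i) else 0)
      ≤ ∑' k : Fin (n+1) → ℕ, H (Ψ k) := ENNReal.tsum_le_tsum hpoint
    _ ≤ ∑' p : (Fin n → ℕ) × ℕ, H p := ENNReal.tsum_comp_le_tsum_of_injective hΨinj H
    _ = (∑' k : Fin n → ℕ, if Inc n k then ∏ i, A (k i) else 0)
          * ∑' j, (if N ≤ j then A j else 0) := by
        rw [ENNReal.tsum_prod (f := fun (t : Fin n → ℕ) (j : ℕ) =>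
          (if Inc n t then ∏ i, A (t i) else 0) * (if N ≤ j then A j else 0))]
        simp_rw [ENNReal.tsum_mul_left, ENNReal.tsum_mul_right]
    _ ≤ ((∑' j, A j) ^ n / n.factorial) * ∑' j, (if N ≤ j then A j else 0) := by
        exact mul_le_mul_left (incsum_le A n) _

end FFaux2

namespace FFaux3
open FFaux FFaux2

lemma Fterm_eq (x : ℕ → ℂ) (n : ℕ) (k : Fin n → ℕ) :
    Fterm x n k = if Inc n k then ∏ i : Fin n, x (k i) * x (k i + 1) else 0 := by
  unfold Fterm Inc
  by_cases h : ∀ i : Fin n, ∀ h : (i : ℕ) + 1 < n, k i + 2 ≤ k ⟨(i : ℕ) + 1, h⟩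
  · rw [if_pos h, if_pos h]
  · rw [if_neg h, if_neg h]

lemma nnnorm_Fterm (x : ℕ → ℂ) (n : ℕ) (k : Fin n → ℕ) :
    (‖Fterm x n k‖₊ : ENNReal) =
      if Inc n k then ∏ i, (‖x (k i) * x (k i + 1)‖₊ : ENNReal) else 0 := by
  rw [Fterm_eq]
  by_cases h : Inc n k
  · rw [if_pos h, if_pos h, nnnorm_prod]
    push_cast
    rfl
  · rw [if_neg h, if_neg h]; simp

lemma inner_bound (x : ℕ → ℂ) (ha : Summable fun k => ‖x k * x (k + 1)‖₊) (n : ℕ) :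
    Summable (Fterm x n) ∧
      ‖∑' k : Fin n → ℕ, Fterm x n k‖₊
        ≤ (∑' k, ‖x k * x (k + 1)‖₊) ^ n / n.factorial := by
  set s : NNReal := ∑' k, ‖x k * x (k + 1)‖₊ with hs
  have hcoe : ((s ^ n / n.factorial : NNReal) : ENNReal)
      = (s : ENNReal) ^ n / (n.factorial : ENNReal) := by
    push_cast [ENNReal.coe_div (by exact_mod_cast Nat.factorial_ne_zero n :
      ((n.factorial : NNReal)) ≠ 0)]
    rfl
  have key : ∑' k : Fin n → ℕ, (‖Fterm x n k‖₊ : ENNReal)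
      ≤ ((s ^ n / n.factorial : NNReal) : ENNReal) := by
    rw [hcoe]
    calc ∑' k : Fin n → ℕ, (‖Fterm x n k‖₊ : ENNReal)
        = ∑' k : Fin n → ℕ,
            if Inc n k then ∏ i, ((‖x (k i) * x (k i + 1)‖₊ : ENNReal)) else 0 :=
          tsum_congr (nnnorm_Fterm x n)
      _ ≤ (∑' j, ((‖x j * x (j + 1)‖₊ : ENNReal))) ^ n / n.factorial := incsum_le _ n
      _ = (s : ENNReal) ^ n / (n.factorial : ENNReal) := by
          rw [hs, ENNReal.coe_tsum ha]
  have hfin : (∑' k : Fin n → ℕ, (‖Fterm x n k‖₊ : ENNReal)) ≠ ⊤ :=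
    ne_top_of_le_ne_top ENNReal.coe_ne_top key
  have hsum_nn : Summable fun k : Fin n → ℕ => ‖Fterm x n k‖₊ :=
    ENNReal.tsum_coe_ne_top_iff_summable.mp hfin
  refine ⟨Summable.of_nnnorm hsum_nn, ?_⟩
  refine (nnnorm_tsum_le hsum_nn).trans ?_
  rw [← ENNReal.coe_tsum hsum_nn] at key
  exact_mod_cast key

end FFaux3

namespace FFaux4
open FFaux FFaux2 FFaux3

lemma y_nnnorm_le (x : ℕ → ℂ) (n k : ℕ) :
    ‖(if k < n then x k else 0) * (if k + 1 < n then x (k+1) else 0)‖₊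
      ≤ ‖x k * x (k + 1)‖₊ := by
  by_cases h : k + 1 < n
  · rw [if_pos h, if_pos (by omega : k < n)]
  · rw [if_neg h, mul_zero, nnnorm_zero]; exact zero_le

lemma diff_bound (x : ℕ → ℂ) (ha : Summable fun k => ‖x k * x (k + 1)‖₊) (n m : ℕ) :
    ‖(∑' k : Fin (m+1) → ℕ, Fterm x (m+1) k)
        - ∑' k : Fin (m+1) → ℕ, Fterm (fun j => if j < n then x j else 0) (m+1) k‖₊
      ≤ ((∑' k, ‖x k * x (k+1)‖₊) ^ m / m.factorial)
          * (∑' j, if n - 1 ≤ j then ‖x j * x (j+1)‖₊ else 0) := by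
  set y : ℕ → ℂ := fun j => if j < n then x j else 0 with hy
  set a : ℕ → NNReal := fun k => ‖x k * x (k+1)‖₊ with hadef
  have hay : Summable fun k => ‖y k * y (k + 1)‖₊ :=
    NNReal.summable_of_le (fun k => y_nnnorm_le x n k) ha
  have hat : Summable fun j => (if n - 1 ≤ j then a j else 0) :=
    NNReal.summable_of_le (fun j => by split_ifs <;> simp) ha
  have hsx := (inner_bound x ha (m+1)).1
  have hsy := (inner_bound y hay (m+1)).1
  set D : (Fin (m+1) → ℕ) → ℂ := fun k => Fterm x (m+1) k - Fterm y (m+1) k with hD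
  -- pointwise ENNReal bound
  have hpoint : ∀ k : Fin (m+1) → ℕ,
      (‖D k‖₊ : ENNReal) ≤
        if Inc (m+1) k ∧ (n - 1) ≤ k (Fin.last m) then ∏ i, ((a (k i) : ENNReal)) else 0 := by
    intro k
    by_cases hI : Inc (m+1) k
    · by_cases hall : ∀ i : Fin (m+1), k i + 1 < n
      · have hxy : Fterm y (m+1) k = Fterm x (m+1) k := by
          rw [Fterm_eq, Fterm_eq, if_pos hI, if_pos hI]
          refine Finset.prod_congr rfl fun i _ => ?_
          have h1 := hall i
          rw [hy]
          simp only [if_pos (by omega : k i < n), if_pos h1]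
        rw [hD]
        simp [hxy]
      · push_neg at hall
        obtain ⟨i0, hi0⟩ := hall
        have hlast : n - 1 ≤ k (Fin.last m) := by
          have := hI.strictMono.monotone (Fin.le_last i0)
          omega
        have hy0 : Fterm y (m+1) k = 0 := by
          rw [Fterm_eq, if_pos hI]
          refine Finset.prod_eq_zero (Finset.mem_univ i0) ?_
          rw [hy]
          simp only [if_neg (by omega : ¬ k i0 + 1 < n), mul_zero]
        rw [hD]
        simp only [hy0, sub_zero]
        rw [nnnorm_Fterm, if_pos hI, if_pos ⟨hI, hlast⟩]
    · have h1 : Fterm x (m+1) k = 0 := by rw [Fterm_eq, if_neg hI]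
      have h2 : Fterm y (m+1) k = 0 := by rw [Fterm_eq, if_neg hI]
      simp [hD, h1, h2]
  have hcoe2 : ∑' j, ((if n - 1 ≤ j then (a j : ENNReal) else 0))
      = ((∑' j, if n - 1 ≤ j then a j else 0 : NNReal) : ENNReal) := by
    rw [ENNReal.coe_tsum hat]
    exact tsum_congr fun j => by split_ifs <;> simp
  have key : ∑' k : Fin (m+1) → ℕ, (‖D k‖₊ : ENNReal)
      ≤ (((∑' k, a k) ^ m / m.factorial)
          * (∑' j, if n - 1 ≤ j then a j else 0) : NNReal) := by
    calc ∑' k : Fin (m+1) → ℕ, (‖D k‖₊ : ENNReal)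
        ≤ ∑' k : Fin (m+1) → ℕ,
            (if Inc (m+1) k ∧ (n - 1) ≤ k (Fin.last m) then ∏ i, ((a (k i) : ENNReal)) else 0) :=
          ENNReal.tsum_le_tsum hpoint
      _ ≤ ((∑' j, (a j : ENNReal)) ^ m / m.factorial)
            * ∑' j, (if n - 1 ≤ j then (a j : ENNReal) else 0) := incsum_last_le _ m (n-1)
      _ = _ := by
          rw [← ENNReal.coe_tsum ha, hcoe2, ENNReal.coe_mul,
            ENNReal.coe_div (by exact_mod_cast Nat.factorial_ne_zero m :
              ((m.factorial : NNReal)) ≠ 0)]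
          push_cast
          rfl
  have hfin : (∑' k : Fin (m+1) → ℕ, (‖D k‖₊ : ENNReal)) ≠ ⊤ :=
    ne_top_of_le_ne_top ENNReal.coe_ne_top key
  have hsum_nn : Summable fun k : Fin (m+1) → ℕ => ‖D k‖₊ :=
    ENNReal.tsum_coe_ne_top_iff_summable.mp hfin
  have htsub : (∑' k : Fin (m+1) → ℕ, Fterm x (m+1) k)
      - (∑' k : Fin (m+1) → ℕ, Fterm y (m+1) k) = ∑' k, D k := (Summable.tsum_sub hsx hsy).symm
  rw [htsub]
  refine (nnnorm_tsum_le hsum_nn).trans ?_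
  rw [← ENNReal.coe_tsum hsum_nn] at key
  exact_mod_cast key

end FFaux4

namespace FFaux5
open FFaux FFaux2 FFaux3 FFaux4

lemma norm_inner_le (x : ℕ → ℂ) (ha : Summable fun k => ‖x k * x (k + 1)‖₊) (n : ℕ) :
    ‖∑' k : Fin n → ℕ, Fterm x n k‖
      ≤ ((∑' k, ‖x k * x (k + 1)‖₊ : NNReal) : ℝ) ^ n / n.factorial := by
  have h := (inner_bound x ha n).2
  calc ‖∑' k : Fin n → ℕ, Fterm x n k‖
      = ((‖∑' k : Fin n → ℕ, Fterm x n k‖₊ : NNReal) : ℝ) := (coe_nnnorm _).symm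
    _ ≤ (((∑' k, ‖x k * x (k + 1)‖₊) ^ n / n.factorial : NNReal) : ℝ) := NNReal.coe_le_coe.mpr h
    _ = _ := by push_cast; ring

lemma norm_g (x : ℕ → ℂ) (m : ℕ) :
    ‖(-1 : ℂ) ^ (m + 1) * ∑' k : Fin (m + 1) → ℕ, Fterm x (m + 1) k‖
      = ‖∑' k : Fin (m + 1) → ℕ, Fterm x (m + 1) k‖ := by
  rw [norm_mul, norm_pow, norm_neg, norm_one, one_pow, one_mul]

lemma summable_bound (s : ℝ) : Summable fun m : ℕ => s ^ (m + 1) / (m + 1).factorial :=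
  (summable_nat_add_iff 1).mpr (Real.summable_pow_div_factorial s)

lemma summable_g (x : ℕ → ℂ) (ha : Summable fun k => ‖x k * x (k + 1)‖₊) :
    Summable (fun m : ℕ => (-1 : ℂ) ^ (m + 1) * ∑' k : Fin (m + 1) → ℕ, Fterm x (m + 1) k) := by
  refine Summable.of_norm_bounded
    (summable_bound ((∑' k, ‖x k * x (k + 1)‖₊ : NNReal) : ℝ)) fun m => ?_
  rw [norm_g]
  exact norm_inner_le x ha (m + 1)

lemma FF_sub_one (x : ℕ → ℂ) :
    FF x - 1 = ∑' m : ℕ, (-1 : ℂ) ^ (m + 1) * ∑' k : Fin (m + 1) → ℕ, Fterm x (m + 1) k := by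
  rw [FF]; ring

lemma norm_FF_sub_one_le (x : ℕ → ℂ) (ha : Summable fun k => ‖x k * x (k + 1)‖₊) :
    ‖FF x - 1‖ ≤ ∑' m : ℕ,
      ((∑' k, ‖x k * x (k + 1)‖₊ : NNReal) : ℝ) ^ (m + 1) / (m + 1).factorial := by
  rw [FF_sub_one]
  set s : ℝ := ((∑' k, ‖x k * x (k + 1)‖₊ : NNReal) : ℝ)
  have h1 : Summable fun m : ℕ =>
      ‖(-1 : ℂ) ^ (m + 1) * ∑' k : Fin (m + 1) → ℕ, Fterm x (m + 1) k‖ := by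
    refine Summable.of_nonneg_of_le (fun m => norm_nonneg _) (fun m => ?_) (summable_bound s)
    rw [norm_g]; exact norm_inner_le x ha (m + 1)
  refine (norm_tsum_le_tsum_norm h1).trans ?_
  refine Summable.tsum_le_tsum (fun m => ?_) h1 (summable_bound s)
  rw [norm_g]; exact norm_inner_le x ha (m + 1)

end FFaux5

open FFaux FFaux2 FFaux3 FFaux4 FFaux5 Filter


theorem FF_limits (x : ℕ → ℂ) (hx : Summable fun k => ‖x k * x (k + 1)‖) :
    Filter.Tendsto (fun n : ℕ => FF fun k => x (k + n)) Filter.atTop (nhds 1) ∧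
      Filter.Tendsto (fun n : ℕ => FFfin n x) Filter.atTop (nhds (FF x)) := by
  set f : ℕ → ℝ := fun k => ‖x k * x (k + 1)‖ with hf
  have ha : Summable fun k => ‖x k * x (k + 1)‖₊ := by
    rw [← NNReal.summable_coe]; simpa [hf] using hx
  set s : ℝ := ((∑' k, ‖x k * x (k + 1)‖₊ : NNReal) : ℝ) with hs
  have hs0 : 0 ≤ s := NNReal.coe_nonneg _
  have hE : Summable fun m : ℕ => s ^ m / m.factorial := Real.summable_pow_div_factorial s
  set E : ℝ := ∑' m : ℕ, s ^ m / m.factorial with hE_def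
  set sfun : ℕ → ℝ := fun n => ∑' k, f (k + n) with hsfun
  have hsfun0 : Filter.Tendsto sfun Filter.atTop (nhds 0) := tendsto_sum_nat_add f
  have hs_eq : s = ∑' k, f k := by rw [hs, NNReal.coe_tsum]; simp [hf]
  have hsfun_le : ∀ n, sfun n ≤ s := by
    intro n
    have h := Summable.sum_add_tsum_nat_add n hx
    have h2 : 0 ≤ ∑ i ∈ Finset.range n, f i :=
      Finset.sum_nonneg fun i _ => norm_nonneg _
    rw [hs_eq]
    rw [hsfun]
    simp only [hf] at h ⊢
    linarith
  constructor
  · -- Part 1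
    rw [tendsto_iff_norm_sub_tendsto_zero]
    refine squeeze_zero (fun n => norm_nonneg _) (fun n => ?_)
      (by simpa using hsfun0.mul_const E)
    set xn : ℕ → ℂ := fun k => x (k + n) with hxn
    have hfn : (fun k => ‖xn k * xn (k + 1)‖) = fun k => f (k + n) := by
      funext k
      simp only [hxn, hf]
      rw [show k + 1 + n = k + n + 1 by omega]
    have hsumn : Summable fun k => ‖xn k * xn (k + 1)‖ := by
      rw [hfn]; exact (summable_nat_add_iff n).mpr hx
    have han : Summable fun k => ‖xn k * xn (k + 1)‖₊ := by
      rw [← NNReal.summable_coe]; simpa using hsumn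
    set sn : ℝ := ((∑' k, ‖xn k * xn (k + 1)‖₊ : NNReal) : ℝ) with hsn
    have hsn_eq : sn = sfun n := by
      rw [hsn, NNReal.coe_tsum]
      exact tsum_congr fun k => by rw [coe_nnnorm]; exact congrFun hfn k
    have hsn0 : 0 ≤ sn := NNReal.coe_nonneg _
    have hsn_le : sn ≤ s := by rw [hsn_eq]; exact hsfun_le n
    refine (norm_FF_sub_one_le xn han).trans ?_
    have hpt : ∀ m : ℕ, sn ^ (m + 1) / (m + 1).factorial ≤ sn * (s ^ m / m.factorial) := by
      intro m
      have h1 : sn ^ (m + 1) ≤ sn * s ^ m := by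
        rw [pow_succ']
        exact mul_le_mul_of_nonneg_left (pow_le_pow_left₀ hsn0 hsn_le m) hsn0
      calc sn ^ (m + 1) / ((m + 1).factorial : ℝ)
          ≤ (sn * s ^ m) / (m.factorial : ℝ) := by
            refine div_le_div₀ (by positivity) h1 (by positivity) ?_
            exact_mod_cast Nat.factorial_le (Nat.le_succ m)
        _ = sn * (s ^ m / m.factorial) := by ring
    calc (∑' m : ℕ, sn ^ (m + 1) / (m + 1).factorial)
        ≤ ∑' m : ℕ, sn * (s ^ m / m.factorial) :=
          Summable.tsum_le_tsum hpt (summable_bound sn) (hE.mul_left sn)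
      _ = sn * E := by rw [tsum_mul_left]
      _ = sfun n * E := by rw [hsn_eq]
  · -- Part 2
    rw [tendsto_iff_norm_sub_tendsto_zero]
    have htail : Filter.Tendsto (fun n : ℕ => sfun (n - 1)) Filter.atTop (nhds 0) :=
      hsfun0.comp (Filter.tendsto_sub_atTop_nat 1)
    refine squeeze_zero (fun n => norm_nonneg _) (fun n => ?_)
      (by simpa using htail.mul_const E)
    set y : ℕ → ℂ := fun j => if j < n then x j else 0 with hy
    have hFFfin : FFfin n x = FF y := rfl
    have hay : Summable fun k => ‖y k * y (k + 1)‖₊ :=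
      NNReal.summable_of_le (fun k => y_nnnorm_le x n k) ha
    have hgx := summable_g x ha
    have hgy := summable_g y hay
    have hat : Summable fun j => (if n - 1 ≤ j then ‖x j * x (j + 1)‖₊ else 0) :=
      NNReal.summable_of_le (fun j => by split_ifs <;> simp) ha
    set t : ℝ := ((∑' j, if n - 1 ≤ j then ‖x j * x (j + 1)‖₊ else 0 : NNReal) : ℝ) with ht
    have ht_eq : t = sfun (n - 1) := by
      rw [ht, NNReal.coe_tsum]
      have h1 : (fun j => ((if n - 1 ≤ j then ‖x j * x (j + 1)‖₊ else 0 : NNReal) : ℝ))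
          = fun j => (if n - 1 ≤ j then f j else 0) := by
        funext j; split_ifs <;> simp [hf]
      rw [h1, hsfun]
      have h2 := Function.Injective.tsum_eq
        (g := fun c : ℕ => c + (n - 1))
        (add_left_injective (n - 1))
        (f := fun j => if n - 1 ≤ j then f j else 0) ?_
      · rw [← h2]
        refine tsum_congr fun c => ?_
        rw [if_pos (Nat.le_add_left _ _)]
      · intro j hj
        simp only [Function.mem_support] at hj
        by_cases hc : n - 1 ≤ j
        · exact ⟨j - (n - 1), show (j - (n - 1)) + (n - 1) = j by omega⟩
        · exact absurd (by rw [if_neg hc]) hj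
    set gx : ℕ → ℂ := fun m => (-1 : ℂ) ^ (m + 1) * ∑' k : Fin (m + 1) → ℕ, Fterm x (m + 1) k
      with hgx_def
    set gy : ℕ → ℂ := fun m => (-1 : ℂ) ^ (m + 1) * ∑' k : Fin (m + 1) → ℕ, Fterm y (m + 1) k
      with hgy_def
    have hnorm : ∀ m : ℕ, ‖gx m - gy m‖ ≤ (s ^ m / m.factorial) * t := by
      intro m
      have h1 : gx m - gy m = (-1 : ℂ) ^ (m + 1) *
          ((∑' k : Fin (m + 1) → ℕ, Fterm x (m + 1) k)
            - ∑' k : Fin (m + 1) → ℕ, Fterm y (m + 1) k) := by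
        rw [hgx_def, hgy_def]; ring
      rw [h1, norm_mul, norm_pow, norm_neg, norm_one, one_pow, one_mul]
      have h2 := diff_bound x ha n m
      calc ‖(∑' k : Fin (m + 1) → ℕ, Fterm x (m + 1) k)
            - ∑' k : Fin (m + 1) → ℕ, Fterm y (m + 1) k‖
          = ((‖(∑' k : Fin (m + 1) → ℕ, Fterm x (m + 1) k)
            - ∑' k : Fin (m + 1) → ℕ, Fterm y (m + 1) k‖₊ : NNReal) : ℝ) := (coe_nnnorm _).symm
        _ ≤ (((((∑' k, ‖x k * x (k + 1)‖₊) ^ m / m.factorial)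
              * (∑' j, if n - 1 ≤ j then ‖x j * x (j + 1)‖₊ else 0)) : NNReal) : ℝ) :=
            NNReal.coe_le_coe.mpr h2
        _ = (s ^ m / m.factorial) * t := by push_cast [hs, ht]; ring
    have hsumnorm : Summable fun m : ℕ => ‖gx m - gy m‖ :=
      Summable.of_nonneg_of_le (fun m => norm_nonneg _) hnorm (hE.mul_right t)
    have hdiff : FF x - FF y = ∑' m : ℕ, (gx m - gy m) := by
      have hFFx : FF x = 1 + ∑' m : ℕ, gx m := rfl
      have hFFy : FF y = 1 + ∑' m : ℕ, gy m := rfl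
      rw [Summable.tsum_sub hgx hgy, hFFx, hFFy]
      ring
    calc ‖FFfin n x - FF x‖ = ‖FF x - FF y‖ := by rw [hFFfin, norm_sub_rev]
      _ = ‖∑' m : ℕ, (gx m - gy m)‖ := by rw [hdiff]
      _ ≤ ∑' m : ℕ, ‖gx m - gy m‖ := norm_tsum_le_tsum_norm hsumnorm
      _ ≤ ∑' m : ℕ, (s ^ m / m.factorial) * t :=
          Summable.tsum_le_tsum hnorm hsumnorm (hE.mul_right t)
      _ = E * t := by rw [tsum_mul_right]
      _ = sfun (n - 1) * E := by rw [ht_eq]; ring
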